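/- For all nonnegative integers x and y with (x,y) ∉ {(0,0),(1,1),(0,1),(1,0)}, G₁(x,y) = G₀(x,y); moreover G₁(0,0) = G₁(1,1) = 1 and G₁(0,1) = G₁(1,0) = 0, while G₀(0,0) = G₀(1,1) = 0 and G₀(0,1) = G₀(1,0) = 1. -/

import Mathlib

/-- mex: least nonnegative integer not in the finite set. -/
noncomputable def mexN (S : Finset ℕ) : ℕ := sInf {n : ℕ | n ∉ S}

/-- `G₀(x,y)`: `G₀(0,0) = 0` and for `x + y > 0`,
`G₀(x,y) = mex({G₀(x',y) : x' < x} ∪ {G₀(x,y') : y' < y})`. -/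
noncomputable def G0 : ℕ → ℕ → ℕ
  | x, y =>
    mexN (((Finset.range x).attach.image fun x' => G0 x'.1 y) ∪
          ((Finset.range y).attach.image fun y' => G0 x y'.1))
termination_by x y => x + y
decreasing_by
  · have := x'.2; simp only [Finset.mem_range] at this; omega
  · have := y'.2; simp only [Finset.mem_range] at this; omega

/-- `G₁(x,y)`: `G₁(0,0) = 1` and for `x + y > 0`,
`G₁(x,y) = mex({G₁(x',y) : x' < x} ∪ {G₁(x,y') : y' < y})`. -/
noncomputable def G1 : ℕ → ℕ → ℕ
  | x, y =>
    if x + y = 0 then 1 else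
    mexN (((Finset.range x).attach.image fun x' => G1 x'.1 y) ∪
          ((Finset.range y).attach.image fun y' => G1 x y'.1))
termination_by x y => x + y
decreasing_by
  · have := x'.2; simp only [Finset.mem_range] at this; omega
  · have := y'.2; simp only [Finset.mem_range] at this; omega

lemma mexN_eq (S : Finset ℕ) (n : ℕ) (h1 : n ∉ S) (h2 : ∀ m < n, m ∈ S) : mexN S = n := by
  unfold mexN
  refine le_antisymm (Nat.sInf_le h1) ?_
  by_contra h
  push_neg at h
  exact (Nat.sInf_mem (⟨n, h1⟩ : Set.Nonempty {k : ℕ | k ∉ S})) (h2 _ h)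

lemma mem_G (g : ℕ → ℕ → ℕ) (x y n : ℕ) :
    n ∈ (((Finset.range x).attach.image fun x' => g x'.1 y) ∪
         ((Finset.range y).attach.image fun y' => g x y'.1)) ↔
    (∃ x' < x, g x' y = n) ∨ (∃ y' < y, g x y' = n) := by
  simp [Finset.mem_union, Finset.mem_image, Finset.mem_range]

lemma G0_eq' : ∀ n x y : ℕ, x + y = n → G0 x y = x ^^^ y := by
  intro n
  induction n using Nat.strong_induction_on with
  | _ n ih =>
    intro x y hxy
    rw [G0]
    apply mexN_eq
    · rw [mem_G]
      rintro (⟨x', hx', hx⟩ | ⟨y', hy', hy⟩)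
      · rw [ih (x' + y) (by omega) x' y rfl] at hx
        have := Nat.xor_left_inj.mp hx
        omega
      · rw [ih (x + y') (by omega) x y' rfl] at hy
        have := Nat.xor_right_inj.mp hy
        omega
    · intro m hm
      rw [mem_G]
      rcases Nat.lt_xor_cases hm with h | h
      · exact Or.inl ⟨m ^^^ y, h, by
          rw [ih ((m ^^^ y) + y) (by omega) _ _ rfl, Nat.xor_xor_cancel_right]⟩
      · exact Or.inr ⟨m ^^^ x, h, by
          rw [ih (x + (m ^^^ x)) (by omega) _ _ rfl, Nat.xor_comm, Nat.xor_xor_cancel_right]⟩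

lemma G0_eq (x y : ℕ) : G0 x y = x ^^^ y := G0_eq' (x + y) x y rfl

def f1 (x y : ℕ) : ℕ := if x ≤ 1 ∧ y ≤ 1 then 1 - (x ^^^ y) else x ^^^ y

lemma xor_small {a b : ℕ} (ha : a ≤ 1) (hb : b ≤ 1) : a ^^^ b ≤ 1 := by
  interval_cases a <;> interval_cases b <;> decide

lemma xor_big {a b : ℕ} (ha : a ≤ 1) (hb : 2 ≤ b) : 2 ≤ a ^^^ b := by
  by_contra h
  push_neg at h
  have : b = a ^^^ (a ^^^ b) := by rw [Nat.xor_xor_cancel_left]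
  have := xor_small ha (show a ^^^ b ≤ 1 by omega)
  omega

lemma G1_eq' : ∀ n x y : ℕ, x + y = n → G1 x y = f1 x y := by
  intro n
  induction n using Nat.strong_induction_on with
  | _ n ih =>
    intro x y hxy
    rw [G1]
    by_cases h0 : x + y = 0
    · rw [if_pos h0]
      have hx : x = 0 := by omega
      have hy : y = 0 := by omega
      subst hx; subst hy
      simp [f1]
    rw [if_neg h0]
    apply mexN_eq
    · rw [mem_G]
      rintro (⟨x', hx', hx⟩ | ⟨y', hy', hy⟩)
      · rw [ih (x' + y) (by omega) x' y rfl] at hx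
        unfold f1 at hx
        split_ifs at hx with h1 h2 h2
        · -- both corner: x' < x ≤ 1 so x' = 0, x = 1
          have hx0 : x' = 0 := by omega
          have hx1 : x = 1 := by omega
          subst hx0; subst hx1
          obtain ⟨-, hy1⟩ := h1
          interval_cases y <;> simp_all
        · -- x' corner, x not
          have hxb : 2 ≤ x := by
            rcases h1 with ⟨_, hy1⟩
            by_contra h; push_neg at h
            exact h2 ⟨by omega, hy1⟩
          have h2' : 2 ≤ x ^^^ y := by
            rw [Nat.xor_comm]; exact xor_big h1.2 hxb
          have := xor_small h1.1 h1.2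
          omega
        · exact h1 ⟨by omega, h2.2⟩
        · have := Nat.xor_left_inj.mp hx
          omega
      · rw [ih (x + y') (by omega) x y' rfl] at hy
        unfold f1 at hy
        split_ifs at hy with h1 h2 h2
        · have hy0 : y' = 0 := by omega
          have hy1 : y = 1 := by omega
          subst hy0; subst hy1
          obtain ⟨hx1, -⟩ := h1
          interval_cases x <;> simp_all
        · have hyb : 2 ≤ y := by
            rcases h1 with ⟨hx1, _⟩
            by_contra h; push_neg at h
            exact h2 ⟨hx1, by omega⟩
          have h2' : 2 ≤ x ^^^ y := xor_big h1.1 hyb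
          have := xor_small h1.1 h1.2
          omega
        · exact h1 ⟨h2.1, by omega⟩
        · have := Nat.xor_right_inj.mp hy
          omega
    · intro m hm
      rw [mem_G]
      by_cases hc : x ≤ 1 ∧ y ≤ 1
      · -- corner, not (0,0): f1 values 0,0,1
        unfold f1 at hm
        rw [if_pos hc] at hm
        rcases hc with ⟨hx1, hy1⟩
        interval_cases x <;> interval_cases y
        · omega
        · have e : (0:ℕ) ^^^ 1 = 1 := by decide
          rw [e] at hm; omega
        · have e : (1:ℕ) ^^^ 0 = 1 := by decide
          rw [e] at hm; omega
        · have e : (1:ℕ) ^^^ 1 = 0 := by decide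
          rw [e] at hm
          have hm0 : m = 0 := by omega
          subst hm0
          exact Or.inl ⟨0, by omega, by
            rw [ih 1 (by omega) 0 1 rfl]; simp [f1]⟩
      · unfold f1 at hm
        rw [if_neg hc] at hm
        rcases Nat.lt_xor_cases hm with h | h
        · by_cases hc' : m ^^^ y ≤ 1 ∧ y ≤ 1
          · have hm1 : m ≤ 1 := by
              have : m = (m ^^^ y) ^^^ y := by rw [Nat.xor_xor_cancel_right]
              have := xor_small hc'.1 hc'.2
              omega
            have hx2 : 2 ≤ x := by
              by_contra hh; push_neg at hh
              exact hc ⟨by omega, hc'.2⟩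
            obtain ⟨-, hyy⟩ := hc'
            refine Or.inl ?_
            interval_cases y <;> interval_cases m
            · exact ⟨1, by omega, by rw [ih 1 (by omega) 1 0 rfl]; simp [f1]⟩
            · exact ⟨0, by omega, by rw [ih 0 (by omega) 0 0 rfl]; simp [f1]⟩
            · exact ⟨0, by omega, by rw [ih 1 (by omega) 0 1 rfl]; simp [f1]⟩
            · exact ⟨1, by omega, by rw [ih 2 (by omega) 1 1 rfl]; simp [f1]⟩
          · exact Or.inl ⟨m ^^^ y, h, by
              rw [ih ((m ^^^ y) + y) (by omega) _ _ rfl]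
              unfold f1
              rw [if_neg hc', Nat.xor_xor_cancel_right]⟩
        · by_cases hc' : x ≤ 1 ∧ m ^^^ x ≤ 1
          · have hm1 : m ≤ 1 := by
              have : m = x ^^^ (m ^^^ x) := by
                rw [Nat.xor_comm m x, Nat.xor_xor_cancel_left]
              have := xor_small hc'.1 hc'.2
              omega
            have hy2 : 2 ≤ y := by
              by_contra hh; push_neg at hh
              exact hc ⟨hc'.1, by omega⟩
            obtain ⟨hxx, -⟩ := hc'
            refine Or.inr ?_
            interval_cases x <;> interval_cases m
            · exact ⟨1, by omega, by rw [ih 1 (by omega) 0 1 rfl]; simp [f1]⟩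
            · exact ⟨0, by omega, by rw [ih 0 (by omega) 0 0 rfl]; simp [f1]⟩
            · exact ⟨0, by omega, by rw [ih 1 (by omega) 1 0 rfl]; simp [f1]⟩
            · exact ⟨1, by omega, by rw [ih 2 (by omega) 1 1 rfl]; simp [f1]⟩
          · exact Or.inr ⟨m ^^^ x, h, by
              rw [ih (x + (m ^^^ x)) (by omega) _ _ rfl]
              unfold f1
              rw [if_neg hc', Nat.xor_comm, Nat.xor_xor_cancel_right]⟩

lemma G1_eq (x y : ℕ) : G1 x y = f1 x y := G1_eq' (x + y) x y rfl

theorem G1_eq_G0_except :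
    (∀ x y : ℕ, (x, y) ≠ (0, 0) → (x, y) ≠ (1, 1) → (x, y) ≠ (0, 1) → (x, y) ≠ (1, 0) →
      G1 x y = G0 x y) ∧
    G1 0 0 = 1 ∧ G1 1 1 = 1 ∧ G1 0 1 = 0 ∧ G1 1 0 = 0 ∧
    G0 0 0 = 0 ∧ G0 1 1 = 0 ∧ G0 0 1 = 1 ∧ G0 1 0 = 1 := by
  refine ⟨?_, ?_, ?_, ?_, ?_, ?_, ?_, ?_, ?_⟩
  · intro x y h00 h11 h01 h10
    rw [G1_eq, G0_eq]
    have hc : ¬(x ≤ 1 ∧ y ≤ 1) := by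
      simp only [ne_eq, Prod.mk.injEq, not_and] at h00 h11 h01 h10
      omega
    unfold f1
    rw [if_neg hc]
  all_goals first | (rw [G1_eq]; simp [f1]) | (rw [G0_eq]; decide)
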